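/- Let X = {0,…,p^k−1} be an indecomposable cycle set with cyclic permutation group generated by the cycle t_1 = (0 1 … p^k−1), with σ_0 = t_1, and write σ_i = t_1^{j_i} for each i. Then every σ_x generates G(X); equivalently, j_i ≡ 1 (mod p) for all i. -/

import Mathlib

section keysec

variable {p : ℕ}

private lemma cs_period {N : ℕ} [NeZero N] (f : ZMod N → ZMod N) (h0 : f 0 = 1)
    (hrel : ∀ x y, f x + f (y + f x) = f y + f (x + f y))
    {a b : ZMod N} (hab : f a = f b) : ∀ x, f (x + (b - a)) = f x := by
  have hstep : ∀ x, f x + f (f x) = 1 + f (x + 1) := by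
    intro x
    have h := hrel x 0
    rwa [zero_add, h0] at h
  have hn : ∀ n : ℕ, f (a + n) = f (b + n) := by
    intro n
    induction n with
    | zero => simpa using hab
    | succ n ih =>
      have h1 := hstep (a + n)
      have h2 := hstep (b + n)
      rw [ih] at h1
      have h3 : f (a + ↑n + 1) = f (b + ↑n + 1) := add_left_cancel (h1.symm.trans h2)
      have e1 : a + (↑(n+1) : ZMod N) = (a + n) + 1 := by push_cast; ring
      have e2 : b + (↑(n+1) : ZMod N) = (b + n) + 1 := by push_cast; ring
      rw [e1, e2]
      exact h3
  intro x
  have h := hn (x - a).val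
  rw [ZMod.natCast_rightInverse (x - a)] at h
  have e1 : a + (x - a) = x := by ring
  have e2 : b + (x - a) = x + (b - a) := by ring
  rw [e1, e2] at h
  exact h.symm

private lemma cs_period_mul {N : ℕ} [NeZero N] (f : ZMod N → ZMod N)
    {d : ZMod N} (hd : ∀ x, f (x + d) = f x) : ∀ (e : ZMod N) x, f (x + e * d) = f x := by
  have key : ∀ (n : ℕ) (x : ZMod N), f (x + (n : ZMod N) * d) = f x := by
    intro n
    induction n with
    | zero => simp
    | succ n ih =>
      intro x
      have e1 : x + (↑(n+1) : ZMod N) * d = (x + (n : ZMod N) * d) + d := by push_cast; ring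
      rw [e1, hd, ih]
  intro e x
  have := key e.val x
  rwa [ZMod.natCast_rightInverse e] at this

private lemma cs_not_inj {N : ℕ} [NeZero N] (hN : 1 < N) (f : ZMod N → ZMod N) (h0 : f 0 = 1)
    (hrel : ∀ x y, f x + f (y + f x) = f y + f (x + f y)) :
    ∃ a b, a ≠ b ∧ f a = f b := by
  haveI : Fact (1 < N) := ⟨hN⟩
  by_contra h
  push_neg at h
  have hinj : Function.Injective f := by
    intro a b hfab
    by_contra hne
    exact h a b hne hfab
  obtain ⟨y, hy⟩ := Finite.injective_iff_surjective.mp hinj 0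
  have hall : ∀ x, f x = 0 := by
    intro x
    have h := hrel y x
    rw [hy, zero_add, add_zero] at h
    have h2 : f (y + f x) = 0 := by linear_combination -h
    have h3 : y + f x = y := hinj (h2.trans hy.symm)
    have h4 : y + f x = y + 0 := by rw [add_zero]; exact h3
    exact add_left_cancel h4
  have := hall 0
  rw [h0] at this
  exact one_ne_zero this

private lemma cs_kernel (hp : p.Prime) (k : ℕ)
    (f : ZMod (p ^ (k + 1)) → ZMod (p ^ (k + 1))) (h0 : f 0 = 1)
    (hrel : ∀ x y, f x + f (y + f x) = f y + f (x + f y)) :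
    ∀ x c, (∃ m : ℕ, c = ((p ^ k * m : ℕ) : ZMod (p ^ (k + 1)))) → f (x + c) = f x := by
  have hN1 : 1 < p ^ (k + 1) := Nat.one_lt_pow (Nat.succ_ne_zero k) hp.one_lt
  haveI : NeZero (p ^ (k + 1)) := ⟨by omega⟩
  obtain ⟨a, b, hne, hab⟩ := cs_not_inj hN1 f h0 hrel
  have hd0 : b - a ≠ 0 := sub_ne_zero.mpr (Ne.symm hne)
  have hper : ∀ x, f (x + (b - a)) = f x := cs_period f h0 hrel hab
  have hmul : ∀ (e : ZMod (p ^ (k+1))) x, f (x + e * (b - a)) = f x := cs_period_mul f hper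
  have hpk : ∃ e : ZMod (p ^ (k+1)), ((p ^ k : ℕ) : ZMod (p ^ (k+1))) = e * (b - a) := by
    have hDne : (b - a).val ≠ 0 := fun h => hd0 ((ZMod.val_eq_zero (b-a)).mp h)
    have hDlt : (b - a).val < p ^ (k+1) := ZMod.val_lt (b - a)
    have hgN : Nat.gcd (b-a).val (p^(k+1)) ∣ p^(k+1) := Nat.gcd_dvd_right _ _
    have hgD : Nat.gcd (b-a).val (p^(k+1)) ∣ (b-a).val := Nat.gcd_dvd_left _ _
    have hgneN : Nat.gcd (b-a).val (p^(k+1)) ≠ p^(k+1) := by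
      intro h
      rw [h] at hgD
      have hdvd : p^(k+1) ∣ (b-a).val := hgD
      have : p^(k+1) ≤ (b-a).val := Nat.le_of_dvd (Nat.pos_of_ne_zero hDne) hdvd
      omega
    obtain ⟨i, hik, hgi⟩ := (Nat.dvd_prime_pow hp).mp hgN
    have hik' : i ≤ k := by
      by_contra hcon
      apply hgneN
      rw [hgi]
      congr 1
      omega
    obtain ⟨r, hr⟩ : p ^ i ∣ p ^ k := pow_dvd_pow p hik'
    have hbez := Nat.gcd_eq_gcd_ab (b-a).val (p^(k+1))
    have hcast : ((Nat.gcd (b-a).val (p^(k+1)) : ℤ) : ZMod (p^(k+1)))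
        = (b - a) * ((Nat.gcdA (b-a).val (p^(k+1)) : ℤ) : ZMod (p^(k+1))) := by
      rw [hbez]
      push_cast
      rw [show ((p : ZMod (p^(k+1)))) ^ (k+1) = 0 from by rw [← Nat.cast_pow, ZMod.natCast_self]]
      rw [show (((b-a).val : ℕ) : ZMod (p^(k+1))) = b - a from ZMod.natCast_rightInverse (b-a)]
      ring
    refine ⟨((Nat.gcdA (b-a).val (p^(k+1)) : ℤ) : ZMod (p^(k+1))) * (r : ZMod (p^(k+1))), ?_⟩
    have h1 : ((p ^ k : ℕ) : ZMod (p^(k+1)))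
        = ((Nat.gcd (b-a).val (p^(k+1)) : ℕ) : ZMod (p^(k+1))) * (r : ZMod (p^(k+1))) := by
      rw [hr, hgi]
      push_cast
      ring
    rw [h1]
    rw [show ((Nat.gcd (b-a).val (p^(k+1)) : ℕ) : ZMod (p^(k+1)))
        = ((Nat.gcd (b-a).val (p^(k+1)) : ℤ) : ZMod (p^(k+1))) by push_cast; ring]
    rw [hcast]
    ring
  obtain ⟨e, he⟩ := hpk
  intro x c hc
  obtain ⟨m, hm⟩ := hc
  have hc2 : c = ((m : ZMod (p^(k+1))) * e) * (b - a) := by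
    rw [hm, Nat.cast_mul, he]
    ring
  rw [hc2]
  exact hmul _ x

end keysec

private lemma keyAux (hp : p.Prime) :
    ∀ (k : ℕ) (f : ZMod (p ^ (k + 1)) → ZMod (p ^ (k + 1))), f 0 = 1 →
    (∀ x y, f x + f (y + f x) = f y + f (x + f y)) →
    ∀ x, ZMod.castHom (dvd_pow_self p (Nat.succ_ne_zero k)) (ZMod p) (f x) = 1 := by
  intro k
  induction k with
  | zero =>
    intro f h0 hrel x
    haveI : NeZero (p ^ (0 + 1)) := ⟨by have := hp.one_lt; simp; omega⟩
    have hfx : f x = 1 := by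
      have h := cs_kernel hp 0 f h0 hrel 0 x ⟨x.val, by
        rw [pow_zero, one_mul]
        exact (ZMod.natCast_rightInverse x).symm⟩
      simp only [zero_add] at h
      rw [h, h0]
    rw [hfx]
    exact map_one _
  | succ k ih =>
    intro f h0 hrel x
    haveI : NeZero (p ^ (k + 1)) := ⟨pow_ne_zero _ hp.ne_zero⟩
    haveI : NeZero (p ^ (k + 1 + 1)) := ⟨pow_ne_zero _ hp.ne_zero⟩
    have hdvd : p ^ (k + 1) ∣ p ^ (k + 1 + 1) := pow_dvd_pow p (by omega)
    set π := ZMod.castHom hdvd (ZMod (p ^ (k + 1))) with hπ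
    have hconst : ∀ u v : ZMod (p ^ (k + 1 + 1)), π u = π v → f u = f v := by
      intro u v huv
      have hc0 : π (v - u) = 0 := by rw [map_sub, huv, sub_self]
      have hcval : ((v - u).val : ZMod (p ^ (k + 1))) = 0 := by
        have : π (((v - u).val : ℕ) : ZMod (p ^ (k + 1 + 1))) = 0 := by
          rw [ZMod.natCast_rightInverse (v - u)]
          exact hc0
        rwa [map_natCast] at this
      obtain ⟨m, hm⟩ := (ZMod.natCast_eq_zero_iff _ _).mp hcval
      have hmem : ∃ m' : ℕ, v - u = ((p ^ (k + 1) * m' : ℕ) : ZMod (p ^ (k + 1 + 1))) :=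
        ⟨m, by rw [← hm]; exact (ZMod.natCast_rightInverse (v - u)).symm⟩
      have h := cs_kernel hp (k + 1) f h0 hrel u (v - u) hmem
      rw [show u + (v - u) = v by ring] at h
      exact h.symm
    have hπl : ∀ z : ZMod (p ^ (k + 1)), π ((z.val : ℕ) : ZMod (p ^ (k + 1 + 1))) = z := by
      intro z
      rw [map_natCast]
      exact ZMod.natCast_rightInverse z
    set F : ZMod (p ^ (k + 1)) → ZMod (p ^ (k + 1)) :=
      fun z => π (f ((z.val : ℕ) : ZMod (p ^ (k + 1 + 1)))) with hF
    have hcomm : ∀ u, π (f u) = F (π u) := by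
      intro u
      have := hconst (((π u).val : ℕ) : ZMod (p ^ (k + 1 + 1))) u (by rw [hπl])
      rw [hF]
      simp only []
      rw [this]
    have hF0 : F 0 = 1 := by
      rw [hF]
      simp only []
      rw [ZMod.val_zero, Nat.cast_zero, h0, map_one]
    have hFrel : ∀ zx zy, F zx + F (zy + F zx) = F zy + F (zx + F zy) := by
      intro zx zy
      have e1 : π (f ((zx.val : ℕ) : ZMod (p ^ (k+1+1)))) = F zx := by rw [hcomm, hπl]
      have e2 : π (f ((zy.val : ℕ) : ZMod (p ^ (k+1+1)))) = F zy := by rw [hcomm, hπl]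
      have e3 : π (f (((zy.val : ℕ) : ZMod (p ^ (k+1+1))) + f ((zx.val : ℕ) : ZMod (p ^ (k+1+1)))))
          = F (zy + F zx) := by rw [hcomm, map_add, hπl, e1]
      have e4 : π (f (((zx.val : ℕ) : ZMod (p ^ (k+1+1))) + f ((zy.val : ℕ) : ZMod (p ^ (k+1+1)))))
          = F (zx + F zy) := by rw [hcomm, map_add, hπl, e2]
      have h := congrArg π (hrel ((zx.val : ℕ) : ZMod (p ^ (k+1+1))) ((zy.val : ℕ) : ZMod (p ^ (k+1+1))))
      rw [map_add, map_add, e1, e2, e3, e4] at h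
      exact h
    have hih := ih F hF0 hFrel (π x)
    have hcomp := ZMod.castHom_comp (dvd_pow_self p (Nat.succ_ne_zero k) : p ∣ p ^ (k + 1)) hdvd
    have happ := congrArg (fun g : ZMod (p ^ (k+1+1)) →+* ZMod p => g (f x)) hcomp
    simp only [RingHom.comp_apply] at happ
    calc ZMod.castHom (dvd_pow_self p (Nat.succ_ne_zero (k+1))) (ZMod p) (f x)
        = ZMod.castHom (dvd_pow_self p (Nat.succ_ne_zero k)) (ZMod p) (π (f x)) := happ.symm
      _ = ZMod.castHom (dvd_pow_self p (Nat.succ_ne_zero k)) (ZMod p) (F (π x)) := by rw [hcomm]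
      _ = 1 := hih


/-- A cycle set: a set with bijective left multiplications `σ x`
satisfying `(x·y)·(x·z) = (y·x)·(y·z)`. -/
structure CycleSet (X : Type*) where
  σ : X → Equiv.Perm X
  cycl : ∀ x y z : X, σ (σ x y) (σ x z) = σ (σ y x) (σ y z)

namespace CycleSet

variable {X Y : Type*}

/-- The permutation group generated by the left multiplications. -/
def permGroup (S : CycleSet X) : Subgroup (Equiv.Perm X) :=
  Subgroup.closure (Set.range S.σ)

/-- Indecomposability: the permutation group acts transitively. -/
def Transitive (S : CycleSet X) : Prop :=
  ∀ x y : X, ∃ g ∈ S.permGroup, g x = y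

/-- The permutation group is abelian. -/
def AbelianPerm (S : CycleSet X) : Prop :=
  ∀ g ∈ S.permGroup, ∀ h ∈ S.permGroup, g * h = h * g

/-- `rel S n x y` holds iff `x` and `y` become equal in the `n`-th iterated
retraction `σ^n(X)`. -/
def rel (S : CycleSet X) : ℕ → X → X → Prop
  | 0 => Eq
  | n + 1 => fun x y => ∀ z, S.rel n (S.σ x z) (S.σ y z)

/-- The cardinality `|σ^n(X)|` of the `n`-th iterated retraction. -/
noncomputable def retCard (S : CycleSet X) (n : ℕ) : ℕ :=
  Nat.card (Quot (S.rel n))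

/-- `X` is multipermutational of level `m`: `m` is minimal with `|σ^m(X)| = 1`. -/
def MultipermLevel (S : CycleSet X) (m : ℕ) : Prop :=
  (∀ x y, S.rel m x y) ∧ ∀ k < m, ¬ (∀ x y, S.rel k x y)

/-- Isomorphism of cycle sets. -/
def Isomorphic (S : CycleSet X) (T : CycleSet Y) : Prop :=
  ∃ F : X → Y, Function.Bijective F ∧ ∀ x y, F (S.σ x y) = T.σ (F x) (F y)

end CycleSet

/-- Let `X = Z/p^kZ` be an indecomposable cycle set with cyclic permutation
group generated by the cycle `t₁ : x ↦ x + 1`, with `σ 0 = t₁` and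
`σ i = t₁ ^ (j i)`.  Then every `σ i` generates the permutation group;
equivalently `j i ≡ 1 (mod p)` for all `i`. -/
theorem stmt5 (p k : ℕ) (hp : p.Prime) (hk : 1 ≤ k)
    (S : CycleSet (ZMod (p ^ k)))
    (t1 : Equiv.Perm (ZMod (p ^ k))) (ht1 : t1 = Equiv.addRight 1)
    (hgen : S.permGroup = Subgroup.zpowers t1) (h0 : S.σ 0 = t1)
    (htr : S.Transitive)
    (j : ZMod (p ^ k) → ℕ) (hj : ∀ i, S.σ i = t1 ^ (j i)) :
    ∀ i, Subgroup.zpowers (S.σ i) = S.permGroup ∧ j i ≡ 1 [MOD p] := by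
  obtain ⟨k', rfl⟩ : ∃ k', k = k' + 1 := ⟨k - 1, by omega⟩
  haveI : NeZero (p ^ (k' + 1)) := ⟨pow_ne_zero _ hp.ne_zero⟩
  have hN1 : 1 < p ^ (k' + 1) := Nat.one_lt_pow (Nat.succ_ne_zero k') hp.one_lt
  have hpow : ∀ n : ℕ, ∀ z : ZMod (p ^ (k' + 1)), (t1 ^ n) z = z + (n : ZMod (p ^ (k' + 1))) := by
    intro n
    induction n with
    | zero => intro z; simp
    | succ n ih =>
      intro z
      simp only [pow_succ, Equiv.Perm.mul_apply]
      rw [ih, ht1]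
      simp only [Equiv.coe_addRight]
      push_cast
      ring
  set f : ZMod (p ^ (k' + 1)) → ZMod (p ^ (k' + 1)) :=
    fun x => ((j x : ℕ) : ZMod (p ^ (k' + 1))) with hf
  have happ : ∀ x z, S.σ x z = z + f x := by
    intro x z
    rw [hj x]
    exact hpow (j x) z
  have hf0 : f 0 = 1 := by
    have h00 : S.σ 0 0 = t1 0 := by rw [h0]
    rw [happ 0 0, ht1] at h00
    simpa using h00
  have hrel : ∀ x y, f x + f (y + f x) = f y + f (x + f y) := by
    intro x y
    have hc := S.cycl x y 0
    simp only [happ, zero_add] at hc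
    exact hc
  have hkey := keyAux hp k' f hf0 hrel
  have hmod : ∀ i, j i ≡ 1 [MOD p] := by
    intro i
    have h := hkey i
    rw [hf] at h
    simp only [] at h
    rw [map_natCast] at h
    have h2 : ((j i : ℕ) : ZMod p) = ((1 : ℕ) : ZMod p) := by rw [h]; simp
    exact (ZMod.natCast_eq_natCast_iff _ _ _).mp h2
  intro i
  refine ⟨?_, hmod i⟩
  have hpj : ¬ p ∣ j i := by
    intro hdvd
    have h1 := ((Nat.modEq_zero_iff_dvd.mpr hdvd)).symm.trans (hmod i)
    have h2 : 0 % p = 1 % p := h1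
    rw [Nat.zero_mod, Nat.mod_eq_of_lt hp.one_lt] at h2
    exact one_ne_zero h2.symm
  have hcp : Nat.Coprime p (j i) := hp.coprime_iff_not_dvd.mpr hpj
  have hcop : Nat.Coprime (j i) (p ^ (k' + 1)) := (Nat.Coprime.pow_left _ hcp).symm
  have tpow_eq : ∀ m n : ℕ, m ≡ n [MOD p ^ (k' + 1)] → t1 ^ m = t1 ^ n := by
    intro m n h
    ext z
    rw [hpow, hpow, (ZMod.natCast_eq_natCast_iff m n _).mpr h]
  obtain ⟨a, -, ha⟩ := Nat.exists_mul_mod_eq_one_of_coprime hcop hN1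
  have ha' : j i * a ≡ 1 [MOD p ^ (k' + 1)] := by
    show (j i * a) % _ = 1 % _
    rw [ha, Nat.mod_eq_of_lt hN1]
  rw [hgen, hj i]
  apply le_antisymm
  · exact Subgroup.zpowers_le.mpr (Subgroup.npow_mem_zpowers t1 (j i))
  · apply Subgroup.zpowers_le.mpr
    have hinv : (t1 ^ j i) ^ a = t1 := by
      rw [← pow_mul]
      have := tpow_eq (j i * a) 1 ha'
      rwa [pow_one] at this
    have hm := Subgroup.npow_mem_zpowers (t1 ^ j i) a
    rw [hinv] at hm
    exact hm
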